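/- Every Gaussian state is convex-Gaussian: for any R ∈ SO(2m,ℝ) and any λ_1, …, λ_m ∈ [−1, 1], the matrix 2^{−m} ∏_{k=1}^m (I + i λ_k c̃_{2k−1} c̃_{2k}), where c̃_j = Σ_{i=1}^{2m} R_{ij} c_i, is a finite convex combination of pure Gaussian states. -/

import Mathlib

open Matrix Kronecker Finset
open scoped ComplexOrder

noncomputable section

/-- A Majorana family: `2*m` Hermitian `2^m × 2^m` complex matrices squaring to the
identity and pairwise anticommuting. -/
structure MajoranaFamily (m : ℕ) where
  c : Fin (2*m) → Matrix (Fin (2^m)) (Fin (2^m)) ℂ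
  herm : ∀ j, (c j).IsHermitian
  sq : ∀ j, c j * c j = 1
  anticomm : ∀ j k, j ≠ k → c j * c k = -(c k * c j)

abbrev Mat (m : ℕ) := Matrix (Fin (2^m)) (Fin (2^m)) ℂ
abbrev Mat2 (m : ℕ) := Matrix (Fin (2^m) × Fin (2^m)) (Fin (2^m) × Fin (2^m)) ℂ
abbrev MatN (m n : ℕ) := Matrix (Fin n → Fin (2^m)) (Fin n → Fin (2^m)) ℂ

variable {m : ℕ}

/-- A state: a positive semidefinite matrix of trace `1`. -/
def IsState {ι : Type*} [Fintype ι] (ρ : Matrix ι ι ℂ) : Prop :=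
  ρ.PosSemidef ∧ ρ.trace = 1

/-- The trace norm `‖X‖₁ = Tr √(XᴴX)`. -/
def traceNorm {ι : Type*} [Fintype ι] [DecidableEq ι] (X : Matrix ι ι ℂ) : ℝ :=
  (((Matrix.posSemidef_conjTranspose_mul_self X).1.eigenvectorUnitary.1 *
    diagonal (((↑) : ℝ → ℂ) ∘ (√·) ∘ (Matrix.posSemidef_conjTranspose_mul_self X).1.eigenvalues) *
    (star (Matrix.posSemidef_conjTranspose_mul_self X).1.eigenvectorUnitary :
      Matrix ι ι ℂ)).trace).re

/-- The rotated Majorana operators `c̃_j = Σ_i R_{ij} c_i`. -/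
def tilde (F : MajoranaFamily m) (R : Matrix (Fin (2*m)) (Fin (2*m)) ℝ)
    (j : Fin (2*m)) : Mat m :=
  ∑ i, (R i j : ℂ) • F.c i

/-- Standard-form Gaussian state `2^{-m} ∏_{k=1}^m (I + i λ_k c̃_{2k-1} c̃_{2k})`
(ordered product; the factors commute). -/
def gaussStd (F : MajoranaFamily m) (R : Matrix (Fin (2*m)) (Fin (2*m)) ℝ)
    (lam : Fin m → ℝ) : Mat m :=
  ((2:ℂ)^m)⁻¹ • (List.ofFn (fun k : Fin m =>
    (1 : Mat m) + (Complex.I * (lam k : ℂ)) •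
      (tilde F R ⟨2*k.val, by omega⟩ * tilde F R ⟨2*k.val+1, by omega⟩))).prod

/-- A pure Gaussian state: a standard-form Gaussian state with all `λ_k ∈ {-1,1}`,
for some `R ∈ SO(2m,ℝ)`. -/
def IsPureGaussian (F : MajoranaFamily m) (ρ : Mat m) : Prop :=
  ∃ (R : Matrix (Fin (2*m)) (Fin (2*m)) ℝ) (lam : Fin m → ℝ),
    Rᵀ * R = 1 ∧ R.det = 1 ∧ (∀ k, lam k = 1 ∨ lam k = -1) ∧ ρ = gaussStd F R lam

/-- A convex-Gaussian state: a finite convex combination of pure Gaussian states. -/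
def IsConvexGaussian (F : MajoranaFamily m) (ρ : Mat m) : Prop :=
  ∃ (k : ℕ) (p : Fin k → ℝ) (g : Fin k → Mat m),
    (∀ i, 0 ≤ p i) ∧ (∑ i, p i) = 1 ∧ (∀ i, IsPureGaussian F (g i)) ∧
    ρ = ∑ i, p i • g i

/-- `Λ = Σ_j c_j ⊗ c_j` on `ℂ^N ⊗ ℂ^N`. -/
def Lambda (F : MajoranaFamily m) : Mat2 m := ∑ j, F.c j ⊗ₖ F.c j

/-- Ordered product `c_{a_1} ⋯ c_{a_r}` over a finite set `S = {a_1 < … < a_r}`. -/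
def majProd (F : MajoranaFamily m) (S : Finset (Fin (2*m))) : Mat m :=
  ((S.sort (· ≤ ·)).map F.c).prod

/-- An even operator: a complex linear combination of the identity and products of
an even number of distinct Majorana operators. -/
def IsEven (F : MajoranaFamily m) (X : Mat m) : Prop :=
  X ∈ Submodule.span ℂ {Y : Mat m | ∃ S : Finset (Fin (2*m)), Even S.card ∧ Y = majProd F S}

/-- The Hermitian correlator `i^k c_{a_1} ⋯ c_{a_{2k}}` associated to a set of
cardinality `2k`. -/
def corrOp (F : MajoranaFamily m) (S : Finset (Fin (2*m))) : Mat m :=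
  (Complex.I ^ (S.card / 2)) • majProd F S

/-- The operator acting as `A` on the `k`-th tensor factor of `(ℂ^N)^{⊗n}` and as the
identity on the other factors. -/
def embedAt (n : ℕ) (k : Fin n) (A : Mat m) : MatN m n :=
  fun x y => A (x k) (y k) * ∏ l ∈ Finset.univ.erase k, (if x l = y l then 1 else 0)

/-- `Λ^{k,l} = Σ_j c_j^{(k)} c_j^{(l)}` on `(ℂ^N)^{⊗n}`. -/
def LambdaKL (F : MajoranaFamily m) (n : ℕ) (k l : Fin n) : MatN m n :=
  ∑ j, embedAt n k (F.c j) * embedAt n l (F.c j)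

/-- Partial trace of an operator on `(ℂ^N)^{⊗n}` over the tensor factors `2, …, n`. -/
def ptrRest (n : ℕ) (hn : 1 ≤ n) (ρ : MatN m n) : Mat m := fun a b =>
  ∑ g : Fin (n-1) → Fin (2^m),
    ρ (fun i => if h : i.val = 0 then a else g ⟨i.val - 1, by omega⟩)
      (fun i => if h : i.val = 0 then b else g ⟨i.val - 1, by omega⟩)

/-- `ρ` has an `n`-Gaussian-symmetric extension. -/
def HasGSExt (F : MajoranaFamily m) (n : ℕ) (hn : 1 ≤ n) (ρ : Mat m) : Prop :=
  ∃ ext : MatN m n, IsState ext ∧ ptrRest n hn ext = ρ ∧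
    ∀ k l : Fin n, k ≠ l → LambdaKL F n k l * ext = 0

/-- `‖Λ‖₁ = 2(m+1) C(2m, m+1)`. -/
def lambdaNorm (m : ℕ) : ℝ := 2*(m+1) * (Nat.choose (2*m) (m+1) : ℝ)

/-- `ε(n) = min {2, 10 ‖Λ‖₁² 2^{2m} n^{-1/3}}`. -/
def epsB (m n : ℕ) : ℝ :=
  min 2 (10 * lambdaNorm m ^ 2 * 2^(2*m) / (n:ℝ) ^ ((1:ℝ)/3))

/-- `χ(n) = (ε(n)/2) (2m)!/m!`. -/
def chiB (m n : ℕ) : ℝ :=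
  epsB m n / 2 * ((Nat.factorial (2*m) : ℝ) / (Nat.factorial m : ℝ))

/-- `δ(n) = χ(n)/(1+χ(n))`. -/
def deltaB (m n : ℕ) : ℝ := chiB m n / (1 + chiB m n)

/-- The parity operator `P = i^m c_1 ⋯ c_{2m}`. -/
def parityOp (F : MajoranaFamily m) : Mat m :=
  (Complex.I ^ m) • (((List.finRange (2*m)).map F.c).prod)

/-- The operator `I^{⊗ r} ⊗ c_s ⊗ P^{⊗(n-r-1)}` on `(ℂ^N)^{⊗n}` (0-based position `r`). -/
def dOp (F : MajoranaFamily m) (n : ℕ) (r : Fin n) (s : Fin (2*m)) : MatN m n :=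
  fun x y => ∏ l : Fin n,
    if l < r then (if x l = y l then 1 else 0)
    else if l = r then F.c s (x l) (y l)
    else parityOp F (x l) (y l)

/-- The family `d_1, …, d_{2mn}`, where `d_{2m(r-1)+s} = I^{⊗(r-1)} ⊗ c_s ⊗ P^{⊗(n-r)}`. -/
def dAll (hm : 1 ≤ m) (F : MajoranaFamily m) (n : ℕ) (j : Fin (2*(m*n))) : MatN m n :=
  dOp F n
    ⟨j.val / (2*m), by
      have h1 := j.isLt
      rw [Nat.div_lt_iff_lt_mul (by omega)]
      have h2 : n * (2*m) = 2*(m*n) := by ring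
      omega⟩
    ⟨j.val % (2*m), Nat.mod_lt _ (by omega)⟩

/-- The index `2m(k-1)+j` (0-based: `2mk + j`) into a family of `2mn` Majorana operators. -/
def bigIdx (m n : ℕ) (k : Fin n) (j : Fin (2*m)) : Fin (2*(m*n)) :=
  ⟨2*m*k.val + j.val, by
    have hk : k.val + 1 ≤ n := k.isLt
    have hj := j.isLt
    have h1 : 2*m*(k.val+1) = 2*m*k.val + 2*m := by ring
    have h2 : 2*m*(k.val+1) ≤ 2*m*n := Nat.mul_le_mul le_rfl hk
    have h3 : 2*m*n = 2*(m*n) := by ring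
    omega⟩

/-- `Γ^{k,l} = Σ_{j=1}^{2m} (-1)^{m-j} e_{2m(k-1)+j} · e_{2m(l-1)+1} ⋯ ê_{2m(l-1)+j} ⋯ e_{2ml}`. -/
def GammaKL (m n : ℕ) (E : MajoranaFamily (m*n)) (k l : Fin n) :
    Matrix (Fin (2^(m*n))) (Fin (2^(m*n))) ℂ :=
  ∑ j : Fin (2*m), ((-1:ℂ) ^ ((m:ℤ) - (j.val+1 : ℤ))) •
    (E.c (bigIdx m n k j) *
      (((List.finRange (2*m)).filter (fun i => i ≠ j)).map
        (fun i => E.c (bigIdx m n l i))).prod)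

/-- `C = i^{mn} e_1 ⋯ e_{2mn}`. -/
def bigParity (m n : ℕ) (E : MajoranaFamily (m*n)) :
    Matrix (Fin (2^(m*n))) (Fin (2^(m*n))) ℂ :=
  (Complex.I ^ (m*n)) • (((List.finRange (2*(m*n))).map E.c).prod)

/-- The `n`-fold tensor power `A^{⊗n}` of a matrix on `ℂ^N`. -/
def tpow (n : ℕ) (A : Mat m) : MatN m n := fun x y => ∏ k, A (x k) (y k)




theorem expandProd {A : Type*} [Ring A] [Algebra ℝ A] :
    ∀ (n : ℕ) (G : Fin n → Bool → A) (w : Fin n → Bool → ℝ),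
    (List.ofFn fun k => w k true • G k true + w k false • G k false).prod
      = ∑ σ : Fin n → Bool, (∏ k, w k (σ k)) • (List.ofFn fun k => G k (σ k)).prod := by
  intro n
  induction n with
  | zero =>
    intro G w
    simp
  | succ n ih =>
    intro G w
    rw [List.ofFn_succ, List.prod_cons, ih (fun k b => G k.succ b) (fun k b => w k.succ b)]
    have hre : ∀ f : (Fin (n+1) → Bool) → A,
        ∑ σ : Fin (n+1) → Bool, f σ
          = ∑ b : Bool, ∑ τ : Fin n → Bool, f (Fin.cons b τ) := by
      intro f
      rw [show (∑ σ : Fin (n+1) → Bool, f σ)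
            = ∑ p : Bool × (Fin n → Bool), f (Fin.cons p.1 p.2) from
          (Fintype.sum_equiv (Fin.consEquiv (fun _ => Bool)) _ _ (fun p => rfl)).symm]
      exact Fintype.sum_prod_type _
    rw [hre]
    simp only [Fintype.sum_bool, Fin.prod_univ_succ, Fin.cons_zero, Fin.cons_succ,
      List.ofFn_succ, List.prod_cons, add_mul, Finset.mul_sum, smul_mul_assoc,
      mul_smul_comm, smul_smul, smul_add, Finset.sum_add_distrib]
    congr 1 <;> exact Finset.sum_congr rfl fun x _ => by rw [mul_comm]


/-- Every Gaussian state in standard form (with `λ_k ∈ [-1,1]`) is convex-Gaussian. -/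
theorem stmt_14 (m : ℕ) (hm : 1 ≤ m) (F : MajoranaFamily m)
    (R : Matrix (Fin (2*m)) (Fin (2*m)) ℝ) (hR : Rᵀ * R = 1) (hdet : R.det = 1)
    (lam : Fin m → ℝ) (hlam : ∀ k, -1 ≤ lam k ∧ lam k ≤ 1) :
    IsConvexGaussian F (gaussStd F R lam) := by
  classical
  set B : Fin m → Mat m := fun k =>
    tilde F R ⟨2*k.val, by omega⟩ * tilde F R ⟨2*k.val+1, by omega⟩ with hB
  set G : Fin m → Bool → Mat m := fun k b =>
    (1 : Mat m) + (Complex.I * (((if b then (1:ℝ) else -1) : ℝ) : ℂ)) • B k with hG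
  set w : Fin m → Bool → ℝ := fun k b =>
    if b then (1 + lam k)/2 else (1 - lam k)/2 with hw
  have hw1 : ∀ k, w k true + w k false = 1 := by
    intro k; simp [hw]; ring
  have hwnn : ∀ k b, 0 ≤ w k b := by
    intro k b
    rcases hlam k with ⟨h1, h2⟩
    cases b <;> simp [hw] <;> linarith
  have hGw : ∀ k, w k true • G k true + w k false • G k false
      = (1 : Mat m) + (Complex.I * (lam k : ℂ)) • B k := by
    intro k
    have e1 : G k true = 1 + Complex.I • B k := by simp [hG]
    have e2 : G k false = 1 + (-Complex.I) • B k := by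
      simp [hG]
    have e3 : w k true = (1 + lam k)/2 := by simp [hw]
    have e4 : w k false = (1 - lam k)/2 := by simp [hw]
    rw [e1, e2, e3, e4, ← algebraMap_smul ℂ ((1 + lam k)/2 : ℝ),
      ← algebraMap_smul ℂ ((1 - lam k)/2 : ℝ)]
    simp only [Complex.coe_algebraMap]
    push_cast
    module
  -- the expansion of the product
  have key : gaussStd F R lam
      = ∑ σ : Fin m → Bool, (∏ k, w k (σ k)) •
          gaussStd F R (fun k => if σ k then 1 else -1) := by
    unfold gaussStd
    have hlist : (List.ofFn (fun k : Fin m =>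
        (1 : Mat m) + (Complex.I * (lam k : ℂ)) •
          (tilde F R ⟨2*k.val, by omega⟩ * tilde F R ⟨2*k.val+1, by omega⟩)))
        = List.ofFn fun k => w k true • G k true + w k false • G k false := by
      congr 1
      funext k
      rw [hGw k]
    rw [hlist, expandProd]
    rw [Finset.smul_sum]
    apply Finset.sum_congr rfl
    intro σ _
    rw [smul_comm]
  -- assemble the convex decomposition
  have hcard : Fintype.card (Fin m → Bool) = 2^m := by simp
  let e : Fin (2^m) ≃ (Fin m → Bool) := (Fintype.equivFinOfCardEq hcard).symm
  refine ⟨2^m, fun i => ∏ k, w k (e i k),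
    fun i => gaussStd F R (fun k => if e i k then 1 else -1), ?_, ?_, ?_, ?_⟩
  · intro i
    exact Finset.prod_nonneg fun k _ => hwnn k _
  · have h2 : (∑ σ : Fin m → Bool, ∏ k, w k (σ k)) = 1 := by
      have := expandProd (A := ℝ) m (fun _ _ => 1) w
      simp only [smul_eq_mul, mul_one, List.prod_ofFn, Finset.prod_const_one] at this
      rw [← this]
      exact Finset.prod_eq_one fun k _ => hw1 k
    exact (Equiv.sum_comp e (fun σ => ∏ k, w k (σ k))).trans h2
  · intro i
    exact ⟨R, fun k => if e i k then 1 else -1, hR, hdet,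
      fun k => by by_cases h : e i k <;> simp [h], rfl⟩
  · rw [key, ← Equiv.sum_comp e]


end
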